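/- arXiv:1901.00114 — 3 statements merged into one kernel-verified Lean document; each statement's English description precedes it below -/
import Mathlib

section
/- Let (Ω, ℱ, ℙ) be a probability space, α ∈ (0,1), Z : ℝ → Ω → ℝ (the random loss as a function of a real parameter θ), and ν : ℝ → ℝ (the value-at-risk level as a function of θ). Fix θ₀ ∈ ℝ and assume: (i) ν is differentiable at θ₀ with derivative ν'(θ₀); (ii) for every θ in a neighborhood of θ₀, ℙ(Z θ ≥ ν θ) = 1 − α; (iii) ℙ(Z θ₀ = ν θ₀) = 0; (iv) for ℙ-almost every ω, the map θ ↦ Z θ ω is differentiable at θ₀ with derivative Z'(θ₀, ω), and there is an integrable function K : Ω → ℝ and a neighborhood U of θ₀ such that |Z θ ω − Z θ' ω| ≤ K(ω)|θ − θ'| for all θ, θ' ∈ U and a.e. ω; (v) for each θ near θ₀, Z θ and (Z θ − ν θ)⁺ are integrable. Then the function C(θ) = ν θ + (1/(1−α))·E[(Z θ − ν θ)⁺] (the CVaR at level α) is differentiable at θ₀ and C'(θ₀) = (1/(1−α)) · ∫_{{ω : Z θ₀ ω ≥ ν θ₀}} Z'(θ₀, ω) dℙ(ω), i.e. the derivative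 of the CVaR equals the conditional expectation E[Z'(θ₀) | Z θ₀ ≥ ν θ₀] of the derivative of the loss over the α-tail event. -/
set_option maxHeartbeats 1000000

open MeasureTheory Filter

/-- **CVaR gradient theorem (scalar parameter).**
If `ν` is differentiable at `θ₀`, `ℙ(Z θ ≥ ν θ) = 1 - α` near `θ₀`,
`ℙ(Z θ₀ = ν θ₀) = 0`, the loss `θ ↦ Z θ ω` is a.s. differentiable at `θ₀` with
derivative `Z' ω` and a.s. locally Lipschitz with integrable constant, and the
relevant integrability holds, then the CVaR
`C θ = ν θ + (1/(1-α)) E[(Z θ - ν θ)⁺]` is differentiable at `θ₀` with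
derivative `(1/(1-α)) ∫_{Z θ₀ ≥ ν θ₀} Z' dℙ`. -/
theorem cvar_hasDerivAt
    {Ω : Type*} [MeasurableSpace Ω] (ℙ : Measure Ω) [IsProbabilityMeasure ℙ]
    (α : ℝ) (hα : α ∈ Set.Ioo (0 : ℝ) 1)
    (Z : ℝ → Ω → ℝ) (ν : ℝ → ℝ) (θ₀ ν' : ℝ) (Z' : Ω → ℝ)
    (hν : HasDerivAt ν ν' θ₀)
    (htail : ∀ᶠ θ in nhds θ₀, ℙ {ω | Z θ ω ≥ ν θ} = ENNReal.ofReal (1 - α))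
    (hzero : ℙ {ω | Z θ₀ ω = ν θ₀} = 0)
    (hderiv : ∀ᵐ ω ∂ℙ, HasDerivAt (fun θ => Z θ ω) (Z' ω) θ₀)
    (hlip : ∃ K : Ω → ℝ, Integrable K ℙ ∧ ∃ U ∈ nhds θ₀,
      ∀ᵐ ω ∂ℙ, ∀ θ ∈ U, ∀ θ' ∈ U, |Z θ ω - Z θ' ω| ≤ K ω * |θ - θ'|)
    (hint : ∀ᶠ θ in nhds θ₀,
      Integrable (Z θ) ℙ ∧ Integrable (fun ω => max (Z θ ω - ν θ) 0) ℙ) :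
    HasDerivAt
      (fun θ => ν θ + (1 - α)⁻¹ * ∫ ω, max (Z θ ω - ν θ) 0 ∂ℙ)
      ((1 - α)⁻¹ * ∫ ω in {ω | Z θ₀ ω ≥ ν θ₀}, Z' ω ∂ℙ) θ₀ := by
  obtain ⟨hα0, hα1⟩ := hα
  have h1α : (0:ℝ) < 1 - α := by linarith
  obtain ⟨K, hKint, U, hU, hKlip⟩ := hlip
  -- notation
  set S : Set Ω := {ω | Z θ₀ ω ≥ ν θ₀} with hS_def
  set F : ℝ → Ω → ℝ := fun θ ω => max (Z θ ω - ν θ) 0 with hF_def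
  set G : Ω → ℝ := S.indicator (fun ω => Z' ω - ν') with hG_def
  -- ν satisfies a Lipschitz-type estimate near θ₀
  have hν_lip : ∀ᶠ θ in nhds θ₀, |ν θ - ν θ₀| ≤ (|ν'| + 1) * |θ - θ₀| := by
    have h := (hasDerivAt_iff_isLittleO.mp hν).def one_pos
    filter_upwards [h] with θ hθ
    have h2 : |ν θ - ν θ₀ - (θ - θ₀) * ν'| ≤ 1 * |θ - θ₀| := by
      simpa [Real.norm_eq_abs, smul_eq_mul] using hθ
    have h3 : |ν θ - ν θ₀| ≤ |ν θ - ν θ₀ - (θ - θ₀) * ν'| + |(θ - θ₀) * ν'| := by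
      calc |ν θ - ν θ₀| = |(ν θ - ν θ₀ - (θ - θ₀) * ν') + (θ - θ₀) * ν'| := by ring_nf
        _ ≤ _ := abs_add_le _ _
    have h4 : |(θ - θ₀) * ν'| = |ν'| * |θ - θ₀| := by
      rw [abs_mul]; ring
    nlinarith [abs_nonneg (θ - θ₀)]
  -- choose a ball
  obtain ⟨ε, hε, hball⟩ := Metric.mem_nhds_iff.mp (Filter.inter_mem hU
    (Filter.inter_mem (hν_lip.and hint) htail))
  have hθ₀U : θ₀ ∈ U := (hball (Metric.mem_ball_self hε)).1
  have hball_int : ∀ θ ∈ Metric.ball θ₀ ε, Integrable (Z θ) ℙ ∧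
      Integrable (fun ω => max (Z θ ω - ν θ) 0) ℙ := fun θ hθ => (hball hθ).2.1.2
  -- a.e. Z θ₀ ω ≠ ν θ₀
  have hne : ∀ᵐ ω ∂ℙ, Z θ₀ ω ≠ ν θ₀ := by
    rw [ae_iff]; simpa using hzero
  -- a.e. bound |Z' ω| ≤ |K ω|
  have hZ'bd : ∀ᵐ ω ∂ℙ, |Z' ω| ≤ |K ω| := by
    filter_upwards [hderiv, hKlip] with ω hd hl
    have htend : Filter.Tendsto (slope (fun θ => Z θ ω) θ₀) (nhdsWithin θ₀ {θ₀}ᶜ)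
        (nhds (Z' ω)) := hasDerivAt_iff_tendsto_slope.mp hd
    have hUmem : U ∈ nhdsWithin θ₀ {θ₀}ᶜ := nhdsWithin_le_nhds hU
    have hbd : ∀ᶠ θ in nhdsWithin θ₀ {θ₀}ᶜ, |slope (fun θ => Z θ ω) θ₀ θ| ≤ |K ω| := by
      filter_upwards [hUmem, self_mem_nhdsWithin] with θ hθU hθne
      have hθne' : θ ≠ θ₀ := hθne
      have hsub : θ - θ₀ ≠ 0 := sub_ne_zero.mpr hθne'
      have := hl θ hθU θ₀ hθ₀U
      rw [slope_def_field]
      rw [div_eq_inv_mul, abs_mul, abs_inv]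
      rw [inv_mul_le_iff₀ (by positivity)]
      calc |Z θ ω - Z θ₀ ω| ≤ K ω * |θ - θ₀| := this
        _ ≤ |K ω| * |θ - θ₀| := by
            have := le_abs_self (K ω); nlinarith [abs_nonneg (θ - θ₀)]
        _ = |θ - θ₀| * |K ω| := mul_comm _ _
    have : Filter.Tendsto (fun θ => |slope (fun θ => Z θ ω) θ₀ θ|)
        (nhdsWithin θ₀ {θ₀}ᶜ) (nhds |Z' ω|) := htend.abs
    exact le_of_tendsto this hbd
  -- a.e. differentiability of F
  have hFdiff : ∀ᵐ ω ∂ℙ, HasDerivAt (fun θ => F θ ω) (G ω) θ₀ := by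
    filter_upwards [hderiv, hne] with ω hd hne'
    have hu : HasDerivAt (fun θ => Z θ ω - ν θ) (Z' ω - ν') θ₀ := hd.sub hν
    rcases lt_or_gt_of_ne hne' with hlt | hgt
    · -- Z θ₀ ω < ν θ₀ : locally F = 0
      have hcont := hu.continuousAt
      have hev : ∀ᶠ θ in nhds θ₀, Z θ ω - ν θ < 0 := by
        have : Set.Iio (0:ℝ) ∈ nhds (Z θ₀ ω - ν θ₀) := Iio_mem_nhds (by linarith)
        exact hcont.eventually_mem this
      have heq : (fun θ => F θ ω) =ᶠ[nhds θ₀] fun _ => (0:ℝ) := by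
        filter_upwards [hev] with θ hθ
        simp [hF_def, max_eq_right hθ.le]
      have hG0 : G ω = 0 := by
        have : ω ∉ S := by simp [hS_def]; linarith
        simp [hG_def, Set.indicator_of_notMem this]
      rw [hG0]
      exact (hasDerivAt_const θ₀ (0:ℝ)).congr_of_eventuallyEq heq
    · -- Z θ₀ ω > ν θ₀ : locally F = Z - ν
      have hcont := hu.continuousAt
      have hev : ∀ᶠ θ in nhds θ₀, 0 < Z θ ω - ν θ := by
        have : Set.Ioi (0:ℝ) ∈ nhds (Z θ₀ ω - ν θ₀) := Ioi_mem_nhds (by linarith)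
        exact hcont.eventually_mem this
      have heq : (fun θ => F θ ω) =ᶠ[nhds θ₀] fun θ => Z θ ω - ν θ := by
        filter_upwards [hev] with θ hθ
        simp [hF_def, max_eq_left hθ.le]
      have hGval : G ω = Z' ω - ν' := by
        have : ω ∈ S := by simp [hS_def]; linarith
        simp [hG_def, Set.indicator_of_mem this]
      rw [hGval]
      exact hu.congr_of_eventuallyEq heq
  -- measurability of Z'
  have hZ'meas : AEStronglyMeasurable Z' ℙ := by
    obtain ⟨δ, hδ, hδint⟩ := Metric.eventually_nhds_iff.mp hint
    set t : ℕ → ℝ := fun n => θ₀ + δ / (n + 2) with ht_def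
    have hpos : ∀ n : ℕ, (0:ℝ) < δ / (n + 2) := by
      intro n; positivity
    have htne : ∀ n, t n ≠ θ₀ := by
      intro n; simp only [ht_def]
      have := hpos n; intro h; nlinarith
    have htmem : ∀ n, dist (t n) θ₀ < δ := by
      intro n
      simp only [ht_def, Real.dist_eq, add_sub_cancel_left]
      rw [abs_of_pos (hpos n)]
      have h2 : (1:ℝ) < (n:ℝ) + 2 := by
        have := Nat.cast_nonneg (α := ℝ) n; linarith
      exact div_lt_self hδ h2
    have htt : Filter.Tendsto t atTop (nhdsWithin θ₀ {θ₀}ᶜ) := by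
      apply tendsto_nhdsWithin_of_tendsto_nhds_of_eventually_within
      · have h1 : Filter.Tendsto (fun n : ℕ => ((n:ℝ) + 2)) atTop atTop :=
          tendsto_atTop_add_const_right _ 2 tendsto_natCast_atTop_atTop
        have h2 : Filter.Tendsto (fun n : ℕ => δ / ((n:ℝ) + 2)) atTop (nhds 0) := by
          simpa [div_eq_mul_inv] using h1.inv_tendsto_atTop.const_mul δ
        have := h2.const_add θ₀
        simpa using this
      · exact Filter.Eventually.of_forall fun n => htne n
    set g : ℕ → Ω → ℝ := fun n ω => (Z (t n) ω - Z θ₀ ω) * (t n - θ₀)⁻¹ with hg_def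
    have hgm : ∀ n, AEStronglyMeasurable (g n) ℙ := by
      intro n
      exact (((hδint (htmem n)).1.aestronglyMeasurable).sub
        ((hδint (by simp [hδ] : dist θ₀ θ₀ < δ)).1.aestronglyMeasurable)).mul_const _
    have hgt : ∀ᵐ ω ∂ℙ, Filter.Tendsto (fun n => g n ω) atTop (nhds (Z' ω)) := by
      filter_upwards [hderiv] with ω hd
      have htend := (hasDerivAt_iff_tendsto_slope.mp hd).comp htt
      convert htend using 2 with n
      simp [hg_def, slope_def_field, Function.comp, div_eq_mul_inv]
    exact aestronglyMeasurable_of_tendsto_ae atTop hgm hgt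
  -- S is a.e. equal to a measurable set T
  have hZθ₀meas : AEStronglyMeasurable (Z θ₀) ℙ := hint.self_of_nhds.1.aestronglyMeasurable
  set f : Ω → ℝ := hZθ₀meas.mk (Z θ₀) with hf_def
  have hfm : StronglyMeasurable f := hZθ₀meas.stronglyMeasurable_mk
  have hfe : Z θ₀ =ᵐ[ℙ] f := hZθ₀meas.ae_eq_mk
  set T : Set Ω := {ω | f ω ≥ ν θ₀} with hT_def
  have hTmeas : MeasurableSet T := by
    have : Measurable f := hfm.measurable
    exact measurableSet_le measurable_const this
  have hST : S =ᵐ[ℙ] T := by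
    rw [Filter.eventuallyEq_set]
    filter_upwards [hfe] with ω hω
    simp [hS_def, hT_def, hω]
  have hGT : G =ᵐ[ℙ] T.indicator (fun ω => Z' ω - ν') := by
    have := Filter.eventuallyEq_set.mp hST
    filter_upwards [this] with ω hω
    simp only [hG_def, Set.indicator_apply]
    by_cases h : ω ∈ S
    · rw [if_pos h, if_pos (hω.mp h)]
    · rw [if_neg h, if_neg (fun hT' => h (hω.mpr hT'))]
  have hGmeas : AEStronglyMeasurable G ℙ := by
    refine AEStronglyMeasurable.congr ?_ hGT.symm
    exact ((hZ'meas.sub aestronglyMeasurable_const).indicator hTmeas)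
  -- Z' is integrable
  have hZ'int : Integrable Z' ℙ := by
    refine hKint.abs.mono' hZ'meas ?_
    filter_upwards [hZ'bd] with ω h
    simpa [Real.norm_eq_abs] using h
  -- the Lipschitz-type bound for F
  have hlipF : ∀ᵐ ω ∂ℙ, ∀ θ ∈ Metric.ball θ₀ ε,
      ‖F θ ω - F θ₀ ω‖ ≤ (|K ω| + (|ν'| + 1)) * ‖θ - θ₀‖ := by
    filter_upwards [hKlip] with ω hl θ hθ
    have hθU : θ ∈ U := (hball hθ).1
    have hνθ : |ν θ - ν θ₀| ≤ (|ν'| + 1) * |θ - θ₀| := (hball hθ).2.1.1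
    have h1 : |F θ ω - F θ₀ ω| ≤ |(Z θ ω - ν θ) - (Z θ₀ ω - ν θ₀)| :=
      abs_max_sub_max_le_abs _ _ _
    have h2 : |(Z θ ω - ν θ) - (Z θ₀ ω - ν θ₀)| ≤ |Z θ ω - Z θ₀ ω| + |ν θ - ν θ₀| := by
      calc |(Z θ ω - ν θ) - (Z θ₀ ω - ν θ₀)|
          = |(Z θ ω - Z θ₀ ω) - (ν θ - ν θ₀)| := by ring_nf
        _ ≤ |Z θ ω - Z θ₀ ω| + |ν θ - ν θ₀| := abs_sub _ _
    have h3 : |Z θ ω - Z θ₀ ω| ≤ |K ω| * |θ - θ₀| := by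
      have := hl θ hθU θ₀ hθ₀U
      have hK := le_abs_self (K ω)
      nlinarith [abs_nonneg (θ - θ₀)]
    simp only [Real.norm_eq_abs]
    nlinarith [abs_nonneg (θ - θ₀)]
  -- apply differentiation under the integral sign
  set L : ℝ →L[ℝ] ℝ →L[ℝ] ℝ := ContinuousLinearMap.smulRightL ℝ ℝ ℝ 1 with hL_def
  have hLd : ∀ᵐ ω ∂ℙ, HasFDerivAt (fun θ => F θ ω) (L (G ω)) θ₀ :=
    hFdiff.mono fun ω h => h.hasFDerivAt
  have hLm : AEStronglyMeasurable (fun ω => L (G ω)) ℙ :=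
    L.continuous.comp_aestronglyMeasurable hGmeas
  obtain ⟨hLint, hkey⟩ := hasFDerivAt_integral_of_dominated_loc_of_lip' (Metric.ball_mem_nhds θ₀ hε)
    (fun θ hθ => (hball_int θ hθ).2.aestronglyMeasurable)
    (hball_int θ₀ (Metric.mem_ball_self hε)).2 hLm hlipF
    (hKint.abs.add (integrable_const (|ν'| + 1))) hLd
  have hGint : Integrable G ℙ := by
    refine (hKint.abs.add (integrable_const (|ν'| + 1))).mono' hGmeas ?_
    filter_upwards [hZ'bd] with ω h
    simp only [Real.norm_eq_abs, hG_def, Set.indicator_apply, Pi.add_apply]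
    by_cases hm : ω ∈ S
    · rw [if_pos hm]
      have h1 : |Z' ω - ν'| ≤ |Z' ω| + |ν'| := abs_sub _ _
      have h2 : (0:ℝ) ≤ |K ω| := abs_nonneg _
      nlinarith
    · rw [if_neg hm]
      have h2 : (0:ℝ) ≤ |K ω| := abs_nonneg _
      have h3 : (0:ℝ) ≤ |ν'| := abs_nonneg _
      simp; nlinarith
  have hgderiv : HasDerivAt (fun θ => ∫ ω, F θ ω ∂ℙ) (∫ ω, G ω ∂ℙ) θ₀ := by
    have h1 := hkey.hasDerivAt
    have h2 : (∫ ω, L (G ω) ∂ℙ) 1 = ∫ ω, G ω ∂ℙ := by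
      rw [ContinuousLinearMap.integral_apply hLint]
      refine integral_congr_ae (Filter.Eventually.of_forall fun ω => ?_)
      show ((1 : ℝ →L[ℝ] ℝ).smulRight (G ω)) 1 = G ω
      simp
    rw [h2] at h1
    exact h1
  -- compute ∫ G
  have hPT : ℙ T = ENNReal.ofReal (1 - α) := by
    rw [← measure_congr hST]
    exact htail.self_of_nhds
  have hrestr : ℙ.restrict S = ℙ.restrict T := Measure.restrict_congr_set hST
  have hGval : ∫ ω, G ω ∂ℙ = (∫ ω in S, Z' ω ∂ℙ) - ν' * (1 - α) := by
    rw [integral_congr_ae hGT, integral_indicator hTmeas]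
    rw [integral_sub (hZ'int.restrict) (integrable_const _)]
    rw [integral_const]
    have : (ℙ.restrict T) Set.univ = ENNReal.ofReal (1 - α) := by
      rw [Measure.restrict_apply_univ, hPT]
    rw [measureReal_def, this, ENNReal.toReal_ofReal h1α.le, ← hrestr, smul_eq_mul]
    ring
  -- final assembly
  have hmain : HasDerivAt
      (fun θ => ν θ + (1 - α)⁻¹ * ∫ ω, F θ ω ∂ℙ)
      (ν' + (1 - α)⁻¹ * ((∫ ω in S, Z' ω ∂ℙ) - ν' * (1 - α))) θ₀ := by
    rw [← hGval]
    exact hν.add (hgderiv.const_mul _)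
  convert hmain using 1
  have hne1 : (1:ℝ) - α ≠ 0 := ne_of_gt h1α
  field_simp
  ring
end

section
/- Let (Ω, ℱ, ℙ) be a probability space and X : ℝ → Ω → ℝ. Fix θ₀ ∈ ℝ and assume: (i) for ℙ-almost every ω, the map θ ↦ X θ ω is differentiable at θ₀ with derivative X'(θ₀, ω); (ii) there exist an integrable function K : Ω → ℝ and a neighborhood U of θ₀ such that |X θ ω − X θ' ω| ≤ K(ω)|θ − θ'| for all θ, θ' ∈ U and a.e. ω; (iii) ℙ(X θ₀ = 0) = 0; (iv) for each θ ∈ U, (X θ)⁺ is integrable. Then the function θ ↦ E[(X θ)⁺] is differentiable at θ₀ with derivative E[1_{X θ₀ ≥ 0} · X'(θ₀)] = ∫_{{ω : X θ₀ ω ≥ 0}} X'(θ₀, ω) dℙ(ω). (Differentiation through the Lipschitz function f(x) = x·1_{x ≥ 0} = x⁺ under the expectation.) -/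
open MeasureTheory Filter

/-- **Differentiating the expected positive part.**
If `θ ↦ X θ ω` is a.s. differentiable at `θ₀` with derivative `X' ω`, is a.s.
Lipschitz near `θ₀` with integrable constant `K`, `ℙ(X θ₀ = 0) = 0`, and
`(X θ)⁺` is integrable for `θ` in the given neighborhood, then
`θ ↦ E[(X θ)⁺]` is differentiable at `θ₀` with derivative
`∫_{X θ₀ ≥ 0} X' dℙ = E[1_{X θ₀ ≥ 0} · X' θ₀]`. -/
theorem hasDerivAt_integral_posPart
    {Ω : Type*} [MeasurableSpace Ω] (ℙ : Measure Ω) [IsProbabilityMeasure ℙ]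
    (X : ℝ → Ω → ℝ) (θ₀ : ℝ) (X' : Ω → ℝ) (K : Ω → ℝ) (U : Set ℝ)
    (hderiv : ∀ᵐ ω ∂ℙ, HasDerivAt (fun θ => X θ ω) (X' ω) θ₀)
    (hK : Integrable K ℙ) (hU : U ∈ nhds θ₀)
    (hlip : ∀ᵐ ω ∂ℙ, ∀ θ ∈ U, ∀ θ' ∈ U, |X θ ω - X θ' ω| ≤ K ω * |θ - θ'|)
    (hzero : ℙ {ω | X θ₀ ω = 0} = 0)
    (hint : ∀ θ ∈ U, Integrable (fun ω => max (X θ ω) 0) ℙ) :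
    HasDerivAt (fun θ => ∫ ω, max (X θ ω) 0 ∂ℙ)
      (∫ ω in {ω | X θ₀ ω ≥ 0}, X' ω ∂ℙ) θ₀ := by
  obtain ⟨ε, εpos, hball⟩ := Metric.mem_nhds_iff.1 hU
  have hθ₀U : θ₀ ∈ U := mem_of_mem_nhds hU
  have hne : ∀ᵐ ω ∂ℙ, X θ₀ ω ≠ 0 := by
    rw [ae_iff]; simpa using hzero
  -- measurable version of the positive part at θ₀
  have hYm : AEStronglyMeasurable (fun ω => max (X θ₀ ω) 0) ℙ :=
    (hint θ₀ hθ₀U).aestronglyMeasurable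
  set h : Ω → ℝ := hYm.mk _ with hdefh
  have hhm : StronglyMeasurable h := hYm.stronglyMeasurable_mk
  have hhe : (fun ω => max (X θ₀ ω) 0) =ᵐ[ℙ] h := hYm.ae_eq_mk
  set t : Set Ω := {ω | 0 < h ω} with ht
  have htm : MeasurableSet t := hhm.measurable measurableSet_Ioi
  -- the set `{X θ₀ ≥ 0}` is a.e. equal to `t`
  have hst : {ω | X θ₀ ω ≥ 0} =ᵐ[ℙ] t := by
    rw [Filter.eventuallyEq_set]
    filter_upwards [hne, hhe] with ω hne0 hhe0
    simp only [ht, Set.mem_setOf_eq, ← hhe0]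
    constructor
    · intro hge
      exact lt_max_of_lt_left (lt_of_le_of_ne hge (Ne.symm hne0))
    · intro hpos
      rcases lt_max_iff.1 hpos with h1 | h1
      · exact le_of_lt h1
      · exact absurd h1 (lt_irrefl 0)
  -- the a.e. derivative of the positive part
  have hderiv' : ∀ᵐ ω ∂ℙ,
      HasDerivAt (fun θ => max (X θ ω) 0) (Set.indicator t X' ω) θ₀ := by
    filter_upwards [hderiv, hne, hhe] with ω hd hne0 hhe0
    by_cases hωt : ω ∈ t
    · have hpos : 0 < X θ₀ ω := by
        have h1 : 0 < max (X θ₀ ω) 0 := by rw [hhe0]; exact hωt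
        rcases lt_max_iff.1 h1 with h2 | h2
        · exact h2
        · exact absurd h2 (lt_irrefl 0)
      have hev : ∀ᶠ θ in nhds θ₀, X θ ω ∈ Set.Ioi (0 : ℝ) :=
        hd.continuousAt (Ioi_mem_nhds hpos)
      rw [Set.indicator_of_mem hωt]
      refine hd.congr_of_eventuallyEq ?_
      filter_upwards [hev] with θ hθ
      exact max_eq_left (le_of_lt hθ)
    · have hneg : X θ₀ ω < 0 := by
        have h1 : ¬ 0 < h ω := hωt
        have h2 : max (X θ₀ ω) 0 ≤ 0 := by rw [hhe0]; exact not_lt.1 h1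
        have h3 : X θ₀ ω ≤ 0 := le_trans (le_max_left _ _) h2
        exact lt_of_le_of_ne h3 hne0
      have hev : ∀ᶠ θ in nhds θ₀, X θ ω ∈ Set.Iio (0 : ℝ) :=
        hd.continuousAt (Iio_mem_nhds hneg)
      rw [Set.indicator_of_notMem hωt]
      refine (hasDerivAt_const θ₀ (0 : ℝ)).congr_of_eventuallyEq ?_
      filter_upwards [hev] with θ hθ
      exact max_eq_right (le_of_lt hθ)
  -- measurability of `F'`
  have hδU : ∀ n : ℕ, θ₀ + ε / 2 / (n + 1) ∈ U := by
    intro n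
    apply hball
    rw [Metric.mem_ball, Real.dist_eq, add_sub_cancel_left]
    have hpos : (0:ℝ) < ε / 2 / (n + 1) := by positivity
    rw [abs_of_pos hpos]
    calc ε / 2 / (n + 1) ≤ ε / 2 / 1 := by
          apply div_le_div_of_nonneg_left (by positivity) one_pos
          exact le_add_of_nonneg_left (Nat.cast_nonneg n)
      _ < ε := by linarith
  have hF'm : AEStronglyMeasurable (Set.indicator t X') ℙ := by
    apply aestronglyMeasurable_of_tendsto_ae (u := atTop)
      (f := fun (n : ℕ) ω =>
        (max (X (θ₀ + ε / 2 / (n + 1)) ω) 0 - max (X θ₀ ω) 0) / (ε / 2 / (n + 1)))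
    · intro n
      exact (((hint _ (hδU n)).aestronglyMeasurable.sub hYm).mul
        (aestronglyMeasurable_const (b := (ε / 2 / (n + 1))⁻¹))).congr
        (by filter_upwards with ω; simp only [Pi.mul_apply, Pi.sub_apply]; ring)
    · filter_upwards [hderiv'] with ω hd
      have hslope := hasDerivAt_iff_tendsto_slope.1 hd
      have htend : Tendsto (fun n : ℕ => θ₀ + ε / 2 / (n + 1)) atTop (nhdsWithin θ₀ {θ₀}ᶜ) := by
        apply tendsto_nhdsWithin_of_tendsto_nhds_of_eventually_within
        · have : Tendsto (fun n : ℕ => ε / 2 / (n + 1)) atTop (nhds 0) := by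
            have := tendsto_one_div_add_atTop_nhds_zero_nat (𝕜 := ℝ)
            have h2 : Tendsto (fun n : ℕ => (ε / 2) * (1 / (n + 1))) atTop (nhds ((ε/2) * 0)) :=
              this.const_mul (ε / 2)
            simpa [div_eq_mul_inv, one_div] using h2
          have h3 := tendsto_const_nhds.add this (f := fun _ : ℕ => θ₀) (x := atTop)
          simpa using h3
        · filter_upwards with n
          simp only [Set.mem_compl_iff, Set.mem_singleton_iff]
          have hpos : (0:ℝ) < ε / 2 / (n + 1) := by positivity
          intro hcontra
          nlinarith [hcontra]
      have := hslope.comp htend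
      refine this.congr fun n => ?_
      rw [Function.comp_apply, slope_def_field, div_eq_div_iff]
      · ring
      · rw [add_sub_cancel_left]; positivity
      · positivity
  -- Lipschitz bound
  have hlip' : ∀ᵐ ω ∂ℙ, LipschitzOnWith (Real.nnabs (K ω))
      (fun θ => max (X θ ω) 0) (Metric.ball θ₀ ε) := by
    filter_upwards [hlip] with ω hω
    apply LipschitzOnWith.of_dist_le_mul
    intro θ hθ θ' hθ'
    rw [Real.dist_eq, Real.dist_eq]
    calc |max (X θ ω) 0 - max (X θ' ω) 0| ≤ |X θ ω - X θ' ω| :=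
          abs_max_sub_max_le_abs _ _ _
      _ ≤ K ω * |θ - θ'| := hω θ (hball hθ) θ' (hball hθ')
      _ ≤ |K ω| * |θ - θ'| :=
          mul_le_mul_of_nonneg_right (le_abs_self _) (abs_nonneg _)
      _ = (Real.nnabs (K ω) : ℝ) * |θ - θ'| := by rw [Real.coe_nnabs]
  have hF_meas : ∀ᶠ θ in nhds θ₀, AEStronglyMeasurable (fun ω => max (X θ ω) 0) ℙ :=
    Filter.eventually_of_mem hU fun θ hθ => (hint θ hθ).aestronglyMeasurable
  have key := hasDerivAt_integral_of_dominated_loc_of_lip (Metric.ball_mem_nhds θ₀ εpos) hF_meas (hint θ₀ hθ₀U)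
    hF'm hlip' hK hderiv'
  have hset : (∫ ω in {ω | X θ₀ ω ≥ 0}, X' ω ∂ℙ) = ∫ ω, Set.indicator t X' ω ∂ℙ := by
    rw [integral_indicator htm, Measure.restrict_congr_set hst]
  rw [hset]
  exact key.2
end

section
/- Let (Ω, ℱ, ℙ) be a probability space, α ∈ (0,1), n a positive integer, Z : ℝⁿ → Ω → ℝ (the random loss as a function of a parameter vector θ ∈ ℝⁿ), and ν : ℝⁿ → ℝ. Fix θ₀ ∈ ℝⁿ and assume: (i) ν is (Fréchet) differentiable at θ₀; (ii) for every θ in a neighborhood of θ₀, ℙ(Z θ ≥ ν θ) = 1 − α; (iii) ℙ(Z θ₀ = ν θ₀) = 0; (iv) for ℙ-almost every ω, the map θ ↦ Z θ ω is Fréchet differentiable at θ₀ with gradient ∇_θ Z(θ₀, ω) ∈ ℝⁿ, and there is an integrable function K : Ω → ℝ and a neighborhood U of θ₀ such that |Z θ ω − Z θ' ω| ≤ K(ω)·‖θ − θ'‖ for all θ, θ' ∈ U and a.e. ω; (v) for each θ ∈ U, Z θ and (Z θ − ν θ)⁺ are integrable. Then the function C(θ) = ν θ + (1/(1−α))·E[(Z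 θ − ν θ)⁺] is Fréchet differentiable at θ₀ and its gradient equals (1/(1−α)) · ∫_{{ω : Z θ₀ ω ≥ ν θ₀}} ∇_θ Z(θ₀, ω) dℙ(ω), i.e. the gradient of the CVaR is the conditional expectation E[∇_θ Z(θ₀) | Z θ₀ ≥ ν θ₀] of the gradient of the loss over the α-tail event. -/
open MeasureTheory Filter Metric InnerProductSpace

set_option maxHeartbeats 1000000 in
/-- **CVaR gradient theorem (vector parameter).**
With parameter space `ℝⁿ`, if `ν` is Fréchet differentiable at `θ₀`,
`ℙ(Z θ ≥ ν θ) = 1 - α` near `θ₀`, `ℙ(Z θ₀ = ν θ₀) = 0`, `θ ↦ Z θ ω` has a.s.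
a gradient `Z' ω` at `θ₀` and is a.s. Lipschitz near `θ₀` with integrable
constant, and the relevant integrability holds, then the CVaR
`C θ = ν θ + (1/(1-α)) E[(Z θ - ν θ)⁺]` has at `θ₀` the gradient
`(1/(1-α)) ∫_{Z θ₀ ≥ ν θ₀} Z' dℙ = E[∇_θ Z(θ₀) ∣ Z θ₀ ≥ ν θ₀]`. -/
theorem cvar_hasGradientAt
    {Ω : Type*} [MeasurableSpace Ω] (ℙ : Measure Ω) [IsProbabilityMeasure ℙ]
    (α : ℝ) (hα : α ∈ Set.Ioo (0 : ℝ) 1) (n : ℕ) (hn : 0 < n)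
    (Z : EuclideanSpace ℝ (Fin n) → Ω → ℝ) (ν : EuclideanSpace ℝ (Fin n) → ℝ)
    (θ₀ : EuclideanSpace ℝ (Fin n)) (Z' : Ω → EuclideanSpace ℝ (Fin n))
    (hν : DifferentiableAt ℝ ν θ₀)
    (htail : ∀ᶠ θ in nhds θ₀, ℙ {ω | Z θ ω ≥ ν θ} = ENNReal.ofReal (1 - α))
    (hzero : ℙ {ω | Z θ₀ ω = ν θ₀} = 0)
    (hgrad : ∀ᵐ ω ∂ℙ, HasGradientAt (fun θ => Z θ ω) (Z' ω) θ₀)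
    (hlip : ∃ K : Ω → ℝ, Integrable K ℙ ∧ ∃ U ∈ nhds θ₀,
      ∀ᵐ ω ∂ℙ, ∀ θ ∈ U, ∀ θ' ∈ U, |Z θ ω - Z θ' ω| ≤ K ω * ‖θ - θ'‖)
    (hint : ∀ᶠ θ in nhds θ₀,
      Integrable (Z θ) ℙ ∧ Integrable (fun ω => max (Z θ ω - ν θ) 0) ℙ) :
    HasGradientAt
      (fun θ => ν θ + (1 - α)⁻¹ * ∫ ω, max (Z θ ω - ν θ) 0 ∂ℙ)
      ((1 - α)⁻¹ • ∫ ω in {ω | Z θ₀ ω ≥ ν θ₀}, Z' ω ∂ℙ) θ₀ := by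
  obtain ⟨K, hK, U, hU, hlipK⟩ := hlip
  have h1α : (0:ℝ) < 1 - α := by linarith [hα.2]
  set ν' : EuclideanSpace ℝ (Fin n) →L[ℝ] ℝ := fderiv ℝ ν θ₀ with hν'def
  have hν' : HasFDerivAt ν ν' θ₀ := hν.hasFDerivAt
  have hne : ∀ᵐ ω ∂ℙ, Z θ₀ ω ≠ ν θ₀ := by
    rw [ae_iff]
    simpa using hzero
  -- local bound for ν
  obtain ⟨c, hc0, hc⟩ : ∃ c > 0, ∀ᶠ θ in nhds θ₀, ‖ν θ - ν θ₀‖ ≤ c * ‖θ - θ₀‖ := by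
    obtain ⟨c, hc0, hc⟩ := hν'.isBigO_sub.exists_pos
    exact ⟨c, hc0, hc.bound⟩
  -- ε-ball inside everything
  obtain ⟨ε, εpos, hball⟩ : ∃ ε > 0, ∀ θ ∈ ball θ₀ ε,
      θ ∈ U ∧ ‖ν θ - ν θ₀‖ ≤ c * ‖θ - θ₀‖ ∧
      Integrable (Z θ) ℙ ∧ Integrable (fun ω => max (Z θ ω - ν θ) 0) ℙ := by
    have h := (eventually_mem_nhds_iff.mpr hU).and (hc.and hint)
    rw [Metric.eventually_nhds_iff_ball] at h
    obtain ⟨ε, εpos, hε⟩ := h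
    exact ⟨ε, εpos, fun θ hθ => ⟨mem_of_mem_nhds (hε θ hθ).1, (hε θ hθ).2.1,
      (hε θ hθ).2.2.1, (hε θ hθ).2.2.2⟩⟩
  have hθ₀ball : θ₀ ∈ ball θ₀ ε := mem_ball_self εpos
  have hZ₀int : Integrable (Z θ₀) ℙ := (hball θ₀ hθ₀ball).2.2.1
  have hF₀int : Integrable (fun ω => max (Z θ₀ ω - ν θ₀) 0) ℙ := (hball θ₀ hθ₀ball).2.2.2
  -- measurability of Z'
  have hinner : ∀ v : EuclideanSpace ℝ (Fin n), ‖v‖ = 1 →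
      AEMeasurable (fun ω => (inner ℝ (Z' ω) v : ℝ)) ℙ := by
    intro v hv
    set t : ℕ → ℝ := fun k => ε / 2 / (k + 1) with htdef
    have htpos : ∀ k, 0 < t k := fun k => by
      apply div_pos (by linarith) (by positivity)
    have hmem : ∀ k, θ₀ + t k • v ∈ ball θ₀ ε := by
      intro k
      have h2 : t k ≤ ε / 2 := by
        rw [htdef]
        apply div_le_self (by linarith) (by push_cast; linarith [Nat.cast_nonneg (α := ℝ) k])
      simp only [mem_ball, dist_eq_norm, add_sub_cancel_left, norm_smul, hv,
        Real.norm_eq_abs, abs_of_pos (htpos k), mul_one]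
      linarith
    have hq : ∀ k, AEMeasurable (fun ω => (Z (θ₀ + t k • v) ω - Z θ₀ ω) / t k) ℙ :=
      fun k => (((hball _ (hmem k)).2.2.1.1.aemeasurable.sub hZ₀int.1.aemeasurable)).div_const _
    refine aemeasurable_of_tendsto_metrizable_ae atTop hq ?_
    filter_upwards [hgrad] with ω hg
    have h1 : HasDerivAt (fun s : ℝ => θ₀ + s • v) v 0 := by
      simpa using ((hasDerivAt_id (0:ℝ)).smul_const v).const_add θ₀
    have h0 : θ₀ + (0:ℝ) • v = θ₀ := by simp
    have hF := hg.hasFDerivAt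
    rw [← h0] at hF
    have hcomp := hF.comp_hasDerivAt 0 h1
    rw [hasDerivAt_iff_tendsto_slope] at hcomp
    have htt : Tendsto t atTop (nhdsWithin 0 {(0:ℝ)}ᶜ) := by
      apply tendsto_nhdsWithin_of_tendsto_nhds_of_eventually_within
      · have : Tendsto (fun k : ℕ => (k:ℝ) + 1) atTop atTop := by
          exact tendsto_natCast_atTop_atTop.atTop_add tendsto_const_nhds
        simpa [htdef, div_eq_mul_inv] using (this.inv_tendsto_atTop).const_mul (ε / 2)
      · exact Eventually.of_forall fun k => (htpos k).ne'
    have h2 := hcomp.comp htt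
    have heq : ∀ k, (slope ((fun θ => Z θ ω) ∘ fun s : ℝ => θ₀ + s • v) 0 ∘ t) k
        = (Z (θ₀ + t k • v) ω - Z θ₀ ω) / t k := by
      intro k
      simp [slope_def_field, Function.comp]
    rw [tendsto_congr heq] at h2
    simpa using h2
  have hZ'meas : AEMeasurable Z' ℙ := by
    have hcoord : ∀ i : Fin n, AEMeasurable (fun ω => Z' ω i) ℙ := by
      intro i
      have := hinner (EuclideanSpace.single i (1:ℝ)) (by simp)
      simpa [EuclideanSpace.inner_single_right] using this
    refine ⟨fun ω => (WithLp.toLp 2 (fun i => (hcoord i).mk _ ω) : EuclideanSpace ℝ (Fin n)), ?_, ?_⟩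
    · exact (WithLp.measurable_toLp 2 _).comp (measurable_pi_iff.mpr fun i => (hcoord i).measurable_mk)
    · filter_upwards [ae_all_iff.mpr fun i => (hcoord i).ae_eq_mk] with ω hω
      ext i; exact hω i
  have hZ'sm : AEStronglyMeasurable Z' ℙ := hZ'meas.aestronglyMeasurable
  -- norm bound for Z', integrability
  have hZ'bd : ∀ᵐ ω ∂ℙ, ‖Z' ω‖ ≤ |K ω| := by
    filter_upwards [hgrad, hlipK] with ω hg hl
    have hbd : ∀ᶠ θ in nhds θ₀, ‖Z θ ω - Z θ₀ ω‖ ≤ |K ω| * ‖θ - θ₀‖ := by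
      filter_upwards [eventually_mem_nhds_iff.mpr hU] with θ hθ
      calc ‖Z θ ω - Z θ₀ ω‖ ≤ K ω * ‖θ - θ₀‖ :=
            hl θ (mem_of_mem_nhds hθ) θ₀ (mem_of_mem_nhds hU)
        _ ≤ |K ω| * ‖θ - θ₀‖ :=
            mul_le_mul_of_nonneg_right (le_abs_self _) (norm_nonneg _)
    have := hg.hasFDerivAt.le_of_lip' (abs_nonneg (K ω)) hbd
    simpa using this
  have hZ'int : Integrable Z' ℙ := hK.abs.mono' hZ'sm hZ'bd
  -- measurable representative of Z θ₀ and the tail event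
  set f := hZ₀int.1.mk (Z θ₀) with hfdef
  have hfeq : Z θ₀ =ᵐ[ℙ] f := hZ₀int.1.ae_eq_mk
  have hfm : StronglyMeasurable f := hZ₀int.1.stronglyMeasurable_mk
  set T : Set Ω := {ω | ν θ₀ < f ω} with hTdef
  have hTm : MeasurableSet T := measurableSet_lt measurable_const hfm.measurable
  -- a.e. relations between sets
  have haeT : T =ᵐ[ℙ] {ω | Z θ₀ ω ≥ ν θ₀} := by
    rw [Filter.eventuallyEq_set]
    filter_upwards [hfeq, hne] with ω hf hne'
    simp only [hTdef, Set.mem_setOf_eq, ← hf, ge_iff_le]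
    exact ⟨le_of_lt, fun h => h.lt_of_ne (Ne.symm hne')⟩
  have hPT : ℙ T = ENNReal.ofReal (1 - α) := by
    rw [measure_congr haeT]
    exact htail.self_of_nhds
  -- the derivative integrand
  set F' : Ω → EuclideanSpace ℝ (Fin n) →L[ℝ] ℝ :=
    T.indicator (fun ω => toDual ℝ (EuclideanSpace ℝ (Fin n)) (Z' ω) - ν') with hF'def
  have hF'meas : AEStronglyMeasurable F' ℙ := by
    refine AEStronglyMeasurable.indicator ?_ hTm
    exact ((toDual ℝ (EuclideanSpace ℝ (Fin n))).toLinearIsometry.toContinuousLinearMap.continuous.comp_aestronglyMeasurable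
      hZ'sm).sub aestronglyMeasurable_const
  have hmain := hasFDerivAt_integral_of_dominated_loc_of_lip'
    (μ := ℙ) (F := fun θ ω => max (Z θ ω - ν θ) 0) (F' := F')
    (bound := fun ω => |K ω| + c) (ball_mem_nhds θ₀ εpos)
    (fun θ hθ => (hball θ hθ).2.2.2.1)
    hF₀int hF'meas ?_ (hK.abs.add (integrable_const c)) ?_
  · obtain ⟨hF'int, hder⟩ := hmain
    rw [hasGradientAt_iff_hasFDerivAt]
    have htot := hν'.add ((hder.const_mul ((1 - α)⁻¹)))
    convert htot using 1
    case e'_8 => rfl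
    case e'_9 => rfl
    case e'_11 => rfl
    -- CLM equality
    apply ContinuousLinearMap.ext; intro v
    have happly : (∫ ω, F' ω ∂ℙ) v = ∫ ω, F' ω v ∂ℙ :=
      ContinuousLinearMap.integral_apply hF'int v
    have hptwise : (fun ω => F' ω v)
        = T.indicator (fun ω => (inner ℝ v (Z' ω) : ℝ) - ν' v) := by
      funext ω
      by_cases hω : ω ∈ T
      · simp [hF'def, Set.indicator_of_mem hω, real_inner_comm, mul_comm]
      · simp [hF'def, Set.indicator_of_notMem hω]
    have hint1 : Integrable (fun ω => (inner ℝ v (Z' ω) : ℝ)) (ℙ.restrict T) :=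
      ContinuousLinearMap.integrable_comp (innerSL ℝ v) hZ'int.restrict
    have hrestr : ℙ.restrict T = ℙ.restrict {ω | Z θ₀ ω ≥ ν θ₀} :=
      Measure.restrict_congr_set haeT
    have hIv : ∫ ω, F' ω v ∂ℙ
        = (inner ℝ v (∫ ω in {ω | Z θ₀ ω ≥ ν θ₀}, Z' ω ∂ℙ) : ℝ) - (1 - α) * ν' v := by
      rw [hptwise, integral_indicator hTm,
        integral_sub hint1 (integrable_const _),
        integral_inner hZ'int.restrict v, hrestr]
      congr 1
      rw [setIntegral_const, measureReal_def, htail.self_of_nhds, ENNReal.toReal_ofReal h1α.le, smul_eq_mul]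
    -- now the arithmetic
    simp only [ContinuousLinearMap.add_apply, ContinuousLinearMap.coe_smul',
      Pi.smul_apply, smul_eq_mul, happly, hIv]
    have htd : toDual ℝ (EuclideanSpace ℝ (Fin n))
        ((1 - α)⁻¹ • ∫ ω in {ω | Z θ₀ ω ≥ ν θ₀}, Z' ω ∂ℙ) v
        = (1 - α)⁻¹ * (inner ℝ v (∫ ω in {ω | Z θ₀ ω ≥ ν θ₀}, Z' ω ∂ℙ) : ℝ) := by
      rw [show (toDual ℝ (EuclideanSpace ℝ (Fin n))
        ((1 - α)⁻¹ • ∫ ω in {ω | Z θ₀ ω ≥ ν θ₀}, Z' ω ∂ℙ) v : ℝ)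
        = inner ℝ ((1 - α)⁻¹ • ∫ ω in {ω | Z θ₀ ω ≥ ν θ₀}, Z' ω ∂ℙ) v from rfl]
      rw [real_inner_smul_left, real_inner_comm]
    rw [htd]
    field_simp
    ring
  · -- Lipschitz bound
    filter_upwards [hlipK] with ω hω θ hθ
    have h1 : |Z θ ω - Z θ₀ ω| ≤ |K ω| * ‖θ - θ₀‖ :=
      le_trans (hω θ (hball θ hθ).1 θ₀ (hball θ₀ hθ₀ball).1)
        (mul_le_mul_of_nonneg_right (le_abs_self _) (norm_nonneg _))
    have h2 : ‖ν θ - ν θ₀‖ ≤ c * ‖θ - θ₀‖ := (hball θ hθ).2.1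
    rw [Real.norm_eq_abs] at h2 ⊢
    calc |max (Z θ ω - ν θ) 0 - max (Z θ₀ ω - ν θ₀) 0|
        ≤ |(Z θ ω - ν θ) - (Z θ₀ ω - ν θ₀)| := abs_max_sub_max_le_abs _ _ _
      _ ≤ |Z θ ω - Z θ₀ ω| + |ν θ - ν θ₀| := by
          rw [show (Z θ ω - ν θ) - (Z θ₀ ω - ν θ₀) = (Z θ ω - Z θ₀ ω) - (ν θ - ν θ₀) by ring]
          exact abs_sub _ _
      _ ≤ (|K ω| + c) * ‖θ - θ₀‖ := by rw [add_mul]; exact add_le_add h1 h2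
  · -- differentiability a.e.
    filter_upwards [hgrad, hfeq, hne] with ω hg hfω hne'
    have hsub : HasFDerivAt (fun θ => Z θ ω - ν θ)
        (toDual ℝ (EuclideanSpace ℝ (Fin n)) (Z' ω) - ν') θ₀ :=
      hg.hasFDerivAt.sub hν'
    have hcont : ContinuousAt (fun θ => Z θ ω - ν θ) θ₀ := hsub.continuousAt
    rcases lt_or_gt_of_ne hne' with hlt | hgt
    · -- Z θ₀ ω < ν θ₀ : the max is 0 near θ₀
      have hωT : ω ∉ T := by
        simp only [hTdef, Set.mem_setOf_eq, not_lt, ← hfω]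
        exact hlt.le
      have hev : ∀ᶠ θ in nhds θ₀, Z θ ω - ν θ < 0 :=
        hcont.eventually_lt_const (show Z θ₀ ω - ν θ₀ < 0 by linarith)
      have : (fun θ => max (Z θ ω - ν θ) 0) =ᶠ[nhds θ₀] fun _ => (0:ℝ) := by
        filter_upwards [hev] with θ hθ
        exact max_eq_right hθ.le
      have h0 : HasFDerivAt (fun θ => max (Z θ ω - ν θ) 0)
          (0 : EuclideanSpace ℝ (Fin n) →L[ℝ] ℝ) θ₀ :=
        (hasFDerivAt_const (0:ℝ) θ₀).congr_of_eventuallyEq this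
      simpa [hF'def, Set.indicator_of_notMem hωT] using h0
    · -- Z θ₀ ω > ν θ₀ : the max is the function near θ₀
      have hωT : ω ∈ T := by
        simp only [hTdef, Set.mem_setOf_eq, ← hfω]
        exact hgt
      have hev : ∀ᶠ θ in nhds θ₀, 0 < Z θ ω - ν θ :=
        hcont.eventually_const_lt (show 0 < Z θ₀ ω - ν θ₀ by linarith)
      have heq : (fun θ => max (Z θ ω - ν θ) 0) =ᶠ[nhds θ₀] fun θ => Z θ ω - ν θ := by
        filter_upwards [hev] with θ hθ
        exact max_eq_left hθ.le
      have h0 := hsub.congr_of_eventuallyEq heq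
      simpa [hF'def, Set.indicator_of_mem hωT] using h0
end
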